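/- Let ℓ > 0, k > 0, and let φ : [0,ℓ] → ℝ be twice continuously differentiable with φ''(s) + (2 cosh⁻²(s) − k²) φ(s) = 0 on [0,ℓ], φ(0) = 0, and φ(ℓ) = tanh(ℓ). Then φ'(ℓ) > cosh⁻²(ℓ) = tanh'(ℓ); that is, every nonzero Fourier mode of a solution of L̃u = 0 vanishing at s = 0 fails the Robin boundary condition φ'(ℓ) tanh(ℓ) − φ(ℓ) cosh⁻²(ℓ) = 0 with strict positive sign. -/

import Mathlib

open Real

/-- Derivative of `tanh`. -/
lemma hasDerivAt_tanh' (x : ℝ) :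
    HasDerivAt Real.tanh ((Real.cosh x ^ 2)⁻¹) x := by
  have h : HasDerivAt (fun y => Real.sinh y / Real.cosh y)
      ((Real.cosh x * Real.cosh x - Real.sinh x * Real.sinh x) / (Real.cosh x)^2) x :=
    (Real.hasDerivAt_sinh x).div (Real.hasDerivAt_cosh x) (ne_of_gt (Real.cosh_pos x))
  have heq : (fun y => Real.sinh y / Real.cosh y) = Real.tanh := by
    funext y; rw [Real.tanh_eq_sinh_div_cosh]
  rw [heq] at h
  convert h using 1
  have := Real.cosh_sq_sub_sinh_sq x
  field_simp
  nlinarith [this]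

/-- Derivative of `(cosh x ^ 2)⁻¹`. -/
lemma hasDerivAt_sech_sq (x : ℝ) :
    HasDerivAt (fun y => (Real.cosh y ^ 2)⁻¹)
      (-(2 * Real.sinh x / Real.cosh x ^ 3)) x := by
  have h : HasDerivAt (fun y => Real.cosh y ^ 2)
      (2 * Real.cosh x ^ 1 * Real.sinh x) x := (Real.hasDerivAt_cosh x).pow 2
  have h2 := h.inv (by positivity : Real.cosh x ^ 2 ≠ 0)
  refine h2.congr_deriv (Eq.symm ?_)
  have hc : Real.cosh x ≠ 0 := ne_of_gt (Real.cosh_pos x)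
  field_simp

lemma continuous_tanh' : Continuous Real.tanh := by
  have : Real.tanh = fun y => Real.sinh y / Real.cosh y := by
    funext y; rw [Real.tanh_eq_sinh_div_cosh]
  rw [this]
  exact Real.continuous_sinh.div Real.continuous_cosh (fun x => ne_of_gt (Real.cosh_pos x))

lemma tanh_pos' {x : ℝ} (hx : 0 < x) : 0 < Real.tanh x := by
  rw [Real.tanh_eq_sinh_div_cosh]
  exact div_pos (Real.sinh_pos_iff.2 hx) (Real.cosh_pos x)

lemma tanh_nonneg' {x : ℝ} (hx : 0 ≤ x) : 0 ≤ Real.tanh x := by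
  rcases eq_or_lt_of_le hx with h | h
  · simp [← h]
  · exact (tanh_pos' h).le

/-- Every nonzero Fourier mode of a solution of `L̃ u = 0` vanishing at `s = 0` fails
the Robin boundary condition with a strictly positive sign: if `φ'' + (2 cosh⁻² − k²) φ = 0`
on `[0,ℓ]`, `φ(0) = 0` and `φ(ℓ) = tanh ℓ`, then `φ'(ℓ) > cosh⁻²(ℓ) = tanh'(ℓ)`. -/
theorem fourier_mode_fails_robin
    (ℓ k : ℝ) (hℓ : 0 < ℓ) (hk : 0 < k)
    (φ φ' φ'' : ℝ → ℝ)
    (hφ' : ∀ s ∈ Set.Icc 0 ℓ, HasDerivAt φ (φ' s) s)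
    (hφ'' : ∀ s ∈ Set.Icc 0 ℓ, HasDerivAt φ' (φ'' s) s)
    (hcont : ContinuousOn φ'' (Set.Icc 0 ℓ))
    (hODE : ∀ s ∈ Set.Icc 0 ℓ,
      φ'' s + (2 * ((Real.cosh s)^2)⁻¹ - k^2) * φ s = 0)
    (h0 : φ 0 = 0) (hℓval : φ ℓ = Real.tanh ℓ) :
    φ' ℓ > ((Real.cosh ℓ)^2)⁻¹ := by
  -- the Wronskian of φ and tanh
  set W : ℝ → ℝ := fun s => φ' s * Real.tanh s - φ s * (Real.cosh s ^ 2)⁻¹ with hW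
  have hφcont : ∀ s ∈ Set.Icc 0 ℓ, ContinuousAt φ s := fun s hs =>
    (hφ' s hs).continuousAt
  -- derivative of W
  have hWd : ∀ s ∈ Set.Icc 0 ℓ, HasDerivAt W (k^2 * (φ s * Real.tanh s)) s := by
    intro s hs
    have h1 := ((hφ'' s hs).mul (hasDerivAt_tanh' s)).sub
      ((hφ' s hs).mul (hasDerivAt_sech_sq s))
    have hode := hODE s hs
    have hφ2 : φ'' s = (k^2 - 2 * (Real.cosh s ^ 2)⁻¹) * φ s := by linarith
    refine h1.congr_deriv (Eq.symm ?_)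
    rw [hφ2, Real.tanh_eq_sinh_div_cosh]
    have hc : Real.cosh s ≠ 0 := ne_of_gt (Real.cosh_pos s)
    field_simp
    ring
  -- the set where φ ≤ 0
  set S : Set ℝ := {s | s ∈ Set.Icc 0 ℓ ∧ φ s ≤ 0} with hS
  have hS0 : (0 : ℝ) ∈ S := ⟨⟨le_refl 0, hℓ.le⟩, le_of_eq h0⟩
  have hSne : S.Nonempty := ⟨0, hS0⟩
  have hSbdd : BddAbove S := ⟨ℓ, fun s hs => hs.1.2⟩
  set s₁ : ℝ := sSup S with hs₁def
  have hs₁mem : s₁ ∈ Set.Icc 0 ℓ := by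
    constructor
    · exact le_csSup hSbdd hS0
    · exact csSup_le hSne fun s hs => hs.1.2
  -- φ s₁ ≤ 0 by continuity
  have hφs₁ : φ s₁ ≤ 0 := by
    have hcl : s₁ ∈ closure S := csSup_mem_closure hSne hSbdd
    rcases mem_closure_iff_seq_limit.1 hcl with ⟨u, hu, hulim⟩
    have hc : ContinuousAt φ s₁ := hφcont s₁ hs₁mem
    exact le_of_tendsto (hc.tendsto.comp hulim) (Filter.Eventually.of_forall fun n => (hu n).2)
  -- φ > 0 on (s₁, ℓ]
  have hφpos : ∀ s, s₁ < s → s ≤ ℓ → 0 < φ s := by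
    intro s h1 h2
    by_contra h
    push_neg at h
    have : s ∈ S := ⟨⟨le_trans hs₁mem.1 h1.le, h2⟩, h⟩
    exact absurd (le_csSup hSbdd this) (not_le.2 h1)
  have hφℓpos : 0 < φ ℓ := by rw [hℓval]; exact tanh_pos' hℓ
  have hs₁lt : s₁ < ℓ := by
    rcases lt_or_eq_of_le hs₁mem.2 with h | h
    · exact h
    · exfalso; rw [h] at hφs₁; linarith
  -- φ'(s₁) ≥ 0 : right slopes are nonnegative
  have hφ's₁ : 0 ≤ φ' s₁ := by
    have hd := (hφ' s₁ hs₁mem)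
    have hslope := hasDerivAt_iff_tendsto_slope.1 hd
    have hslope' : Filter.Tendsto (slope φ s₁) (nhdsWithin s₁ (Set.Ioi s₁)) (nhds (φ' s₁)) :=
      hslope.mono_left (nhdsWithin_mono s₁ fun x hx => ne_of_gt hx)
    refine ge_of_tendsto hslope' ?_
    filter_upwards [Ioo_mem_nhdsGT_of_mem (Set.left_mem_Ico.2 hs₁lt)] with x hx
    have hφx : 0 < φ x := hφpos x hx.1 hx.2.le
    rw [slope_def_field]
    apply div_nonneg (by linarith) (by linarith [hx.1])
  -- FTC for W on [s₁, ℓ]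
  have hsub : Set.uIcc s₁ ℓ ⊆ Set.Icc 0 ℓ := by
    rw [Set.uIcc_of_le hs₁lt.le]
    exact Set.Icc_subset_Icc hs₁mem.1 le_rfl
  have hcontφ : ContinuousOn φ (Set.Icc 0 ℓ) := fun s hs => (hφcont s hs).continuousWithinAt
  have hintg : IntervalIntegrable (fun s => k^2 * (φ s * Real.tanh s)) MeasureTheory.volume s₁ ℓ := by
    apply ContinuousOn.intervalIntegrable
    exact (continuousOn_const.mul ((hcontφ.mono hsub).mul
      (continuous_tanh'.continuousOn)))
  have hFTC : ∫ s in s₁..ℓ, k^2 * (φ s * Real.tanh s) = W ℓ - W s₁ :=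
    intervalIntegral.integral_eq_sub_of_hasDerivAt (fun s hs => hWd s (hsub hs)) hintg
  -- the integral is positive
  have hintpos : 0 < ∫ s in s₁..ℓ, k^2 * (φ s * Real.tanh s) := by
    apply intervalIntegral.intervalIntegral_pos_of_pos_on hintg _ hs₁lt
    intro x hx
    have hx0 : 0 < x := lt_of_le_of_lt hs₁mem.1 hx.1
    have := hφpos x hx.1 hx.2.le
    have := tanh_pos' hx0
    positivity
  -- W s₁ ≥ 0
  have hWs₁ : 0 ≤ W s₁ := by
    have h1 : 0 ≤ φ' s₁ * Real.tanh s₁ := mul_nonneg hφ's₁ (tanh_nonneg' hs₁mem.1)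
    have h2 : φ s₁ * (Real.cosh s₁ ^ 2)⁻¹ ≤ 0 :=
      mul_nonpos_of_nonpos_of_nonneg hφs₁ (by positivity)
    simp only [hW]
    linarith
  have hWℓ : 0 < W ℓ := by linarith [hFTC ▸ hintpos]
  -- conclude
  have htℓ : 0 < Real.tanh ℓ := tanh_pos' hℓ
  have : φ' ℓ * Real.tanh ℓ - Real.tanh ℓ * (Real.cosh ℓ ^ 2)⁻¹ > 0 := by
    have := hWℓ
    simp only [hW, hℓval] at this
    linarith
  nlinarith [this, htℓ]
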